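/- Let θ > 0, μ > 1, b > 0, a > 0 and φ > 0. Define the batch sizes m_i = ⌈θ(μ − 1 + i)·(ln(μ + i − 1))^{1+b}⌉ for i ≥ 1. If n₀ ≥ 1 is an integer satisfying n₀ ≥ 1 − μ + exp((a/(φθb))^{1/b}), then Σ_{i ≥ n₀} 1/m_{i+1} ≤ φ/a. -/

import Mathlib

open Real

-- derivative of F u = b⁻¹ * (log u)^(-b)
lemma aux_deriv (b : ℝ) (hb : 0 < b) (u : ℝ) (hu : 1 < u) :
    HasDerivAt (fun y : ℝ => b⁻¹ * Real.log y ^ (-b))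
      (-(u * Real.log u ^ (1 + b))⁻¹) u := by
  have hL : 0 < Real.log u := Real.log_pos hu
  have hlog : HasDerivAt Real.log u⁻¹ u := Real.hasDerivAt_log (by positivity)
  have hr : HasDerivAt (fun y : ℝ => y ^ (-b))
      (-b * Real.log u ^ (-b - 1)) (Real.log u) :=
    Real.hasDerivAt_rpow_const (Or.inl (ne_of_gt hL))
  have h := (hr.comp u hlog).const_mul b⁻¹
  refine h.congr_deriv ?_
  have h1 : Real.log u ^ (-b - 1) = (Real.log u ^ (1 + b))⁻¹ := by
    rw [show (-b - 1 : ℝ) = -(1 + b) by ring, Real.rpow_neg hL.le]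
  rw [h1]
  field_simp

lemma aux_step (b : ℝ) (hb : 0 < b) (x : ℝ) (hx : 1 < x - 1) :
    (x * Real.log x ^ (1 + b))⁻¹ ≤
      b⁻¹ * Real.log (x - 1) ^ (-b) - b⁻¹ * Real.log x ^ (-b) := by
  set F : ℝ → ℝ := fun y => b⁻¹ * Real.log y ^ (-b) with hF
  have hder : ∀ u ∈ Set.Icc (x - 1) x, HasDerivAt F (-(u * Real.log u ^ (1 + b))⁻¹) u := by
    intro u hu
    exact aux_deriv b hb u (lt_of_lt_of_le hx hu.1)
  have hlt : x - 1 < x := by linarith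
  obtain ⟨ξ, hξ, hslope⟩ := exists_hasDerivAt_eq_slope F
      (fun u => -(u * Real.log u ^ (1 + b))⁻¹) hlt
      (fun u hu => (hder u hu).continuousAt.continuousWithinAt)
      (fun u hu => hder u ⟨hu.1.le, hu.2.le⟩)
  have hξ1 : 1 < ξ := lt_trans hx hξ.1
  have hx1 : 1 < x := by linarith
  have hFsub : F (x - 1) - F x = (ξ * Real.log ξ ^ (1 + b))⁻¹ := by
    have : (F x - F (x - 1)) / (x - (x - 1)) = -(ξ * Real.log ξ ^ (1 + b))⁻¹ := hslope.symm
    rw [show x - (x - 1) = 1 by ring, div_one] at this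
    linarith
  rw [hFsub]
  have hLξ : 0 < Real.log ξ := Real.log_pos hξ1
  have hposξ : 0 < ξ * Real.log ξ ^ (1 + b) := by positivity
  apply inv_anti₀ hposξ
  have : Real.log ξ ^ (1 + b) ≤ Real.log x ^ (1 + b) :=
    Real.rpow_le_rpow hLξ.le (Real.log_le_log (by linarith) hξ.2.le) (by linarith)
  have hξx : ξ ≤ x := hξ.2.le
  nlinarith [hLξ, Real.rpow_pos_of_pos hLξ (1 + b)]

/-- Tail-sum bound for the polynomial-logarithmic sample-rate schedule
`m_i = ⌈θ(μ−1+i) ln(μ+i−1)^{1+b}⌉`: once `n₀ ≥ 1 − μ + exp((a/(φθb))^{1/b})`,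
the tail sum `Σ_{i ≥ n₀} 1/m_{i+1}` is at most `φ/a`. -/
theorem stmt_18 (θ μ b a φ : ℝ)
    (hθ : 0 < θ) (hμ : 1 < μ) (hb : 0 < b) (ha : 0 < a) (hφ : 0 < φ)
    (m : ℕ → ℤ)
    (hm : ∀ i : ℕ, 1 ≤ i → m i = ⌈θ * (μ - 1 + (i : ℝ)) * Real.log (μ + (i : ℝ) - 1) ^ (1 + b)⌉)
    (n₀ : ℕ) (hn₀1 : 1 ≤ n₀)
    (hn₀ : 1 - μ + Real.exp ((a / (φ * θ * b)) ^ (1 / b)) ≤ (n₀ : ℝ)) :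
    Summable (fun i : ℕ => ((m (n₀ + i + 1) : ℝ))⁻¹) ∧
      ∑' i : ℕ, ((m (n₀ + i + 1) : ℝ))⁻¹ ≤ φ / a := by
  set c : ℝ := (a / (φ * θ * b)) ^ (1 / b) with hc
  have hc0 : 0 < c := Real.rpow_pos_of_pos (by positivity) _
  have hec : 1 < Real.exp c := by
    have := Real.add_one_le_exp c; linarith
  -- x i := μ + n₀ + i
  set x : ℕ → ℝ := fun i => μ + n₀ + i with hxdef
  have hxec : ∀ i : ℕ, Real.exp c ≤ x i - 1 := by
    intro i
    have : (0:ℝ) ≤ i := Nat.cast_nonneg i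
    simp only [hxdef]; linarith
  have hx2 : ∀ i : ℕ, 1 < x i - 1 := fun i => lt_of_lt_of_le hec (hxec i)
  -- term formula
  have hterm : ∀ i : ℕ, (m (n₀ + i + 1) : ℝ) = (⌈θ * x i * Real.log (x i) ^ (1 + b)⌉ : ℤ) := by
    intro i
    rw [hm (n₀ + i + 1) (by omega)]
    simp only [hxdef]
    push_cast
    ring_nf
  -- positivity and pointwise bound
  have hpos : ∀ i : ℕ, 0 < θ * x i * Real.log (x i) ^ (1 + b) := by
    intro i
    have h1 : 1 < x i := by have := hx2 i; linarith
    have := Real.log_pos h1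
    positivity
  have hterm_le : ∀ i : ℕ,
      ((m (n₀ + i + 1) : ℝ))⁻¹ ≤
        θ⁻¹ * (b⁻¹ * Real.log (x i - 1) ^ (-b) - b⁻¹ * Real.log (x i) ^ (-b)) := by
    intro i
    have h1 : ((m (n₀ + i + 1) : ℝ))⁻¹ ≤ (θ * x i * Real.log (x i) ^ (1 + b))⁻¹ := by
      rw [hterm i]
      apply inv_anti₀ (hpos i)
      exact Int.le_ceil _
    refine h1.trans ?_
    have h2 := aux_step b hb (x i) (hx2 i)
    calc (θ * x i * Real.log (x i) ^ (1 + b))⁻¹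
        = θ⁻¹ * (x i * Real.log (x i) ^ (1 + b))⁻¹ := by rw [mul_assoc, mul_inv]
      _ ≤ θ⁻¹ * (b⁻¹ * Real.log (x i - 1) ^ (-b) - b⁻¹ * Real.log (x i) ^ (-b)) := by
          apply mul_le_mul_of_nonneg_left h2 (by positivity)
  -- nonnegativity of terms
  have hterm_nonneg : ∀ i : ℕ, 0 ≤ ((m (n₀ + i + 1) : ℝ))⁻¹ := by
    intro i
    rw [hterm i]
    have : (0:ℝ) < (⌈θ * x i * Real.log (x i) ^ (1 + b)⌉ : ℤ) :=
      lt_of_lt_of_le (hpos i) (Int.le_ceil _)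
    positivity
  -- telescoping: define g i = θ⁻¹ * b⁻¹ * log(x i - 1)^(-b)
  set g : ℕ → ℝ := fun i => θ⁻¹ * (b⁻¹ * Real.log (x i - 1) ^ (-b)) with hg
  have hgx : ∀ i : ℕ, x (i + 1) - 1 = x i := by
    intro i; simp only [hxdef]; push_cast; ring
  have hstep : ∀ i : ℕ, ((m (n₀ + i + 1) : ℝ))⁻¹ ≤ g i - g (i + 1) := by
    intro i
    have := hterm_le i
    simp only [hg, hgx i]
    linarith [hterm_le i]
  have hgnonneg : ∀ i : ℕ, 0 ≤ g i := by
    intro i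
    have h1 : 0 < Real.log (x i - 1) := Real.log_pos (hx2 i)
    have : (0:ℝ) < Real.log (x i - 1) ^ (-b) := Real.rpow_pos_of_pos h1 _
    simp only [hg]; positivity
  -- partial sums bounded by g 0
  have hsum : ∀ n : ℕ, ∑ i ∈ Finset.range n, ((m (n₀ + i + 1) : ℝ))⁻¹ ≤ g 0 := by
    intro n
    calc ∑ i ∈ Finset.range n, ((m (n₀ + i + 1) : ℝ))⁻¹
        ≤ ∑ i ∈ Finset.range n, (g i - g (i + 1)) :=
          Finset.sum_le_sum fun i _ => hstep i
      _ = g 0 - g n := by rw [Finset.sum_range_sub' g]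
      _ ≤ g 0 := by linarith [hgnonneg n]
  -- bound g 0
  have hg0 : g 0 ≤ φ / a := by
    have hL : c ≤ Real.log (x 0 - 1) := by
      rw [← Real.log_exp c]
      exact Real.log_le_log (Real.exp_pos c) (hxec 0)
    have hcb : c ^ b = a / (φ * θ * b) := by
      rw [hc, ← Real.rpow_mul (by positivity : (0:ℝ) ≤ a / (φ * θ * b)),
        one_div, inv_mul_cancel₀ hb.ne', Real.rpow_one]
    have hLb : a / (φ * θ * b) ≤ Real.log (x 0 - 1) ^ b := by
      rw [← hcb]
      exact Real.rpow_le_rpow hc0.le hL hb.le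
    have hLb0 : 0 < Real.log (x 0 - 1) ^ b := lt_of_lt_of_le (by positivity) hLb
    have : Real.log (x 0 - 1) ^ (-b) = (Real.log (x 0 - 1) ^ b)⁻¹ := by
      rw [Real.rpow_neg (Real.log_pos (hx2 0)).le]
    simp only [hg, this]
    set L := Real.log (x 0 - 1) ^ b with hLdef
    have key : a ≤ L * (φ * θ * b) := (div_le_iff₀ (by positivity)).mp hLb
    rw [le_div_iff₀ ha]
    have heq : θ⁻¹ * (b⁻¹ * L⁻¹) * a = a / (θ * b * L) := by
      rw [div_eq_mul_inv, mul_inv, mul_inv]; ring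
    rw [heq, div_le_iff₀ (by positivity)]
    nlinarith [key]
  refine ⟨summable_of_sum_range_le hterm_nonneg hsum, ?_⟩
  exact le_trans (tsum_le_of_sum_range_le hterm_nonneg hsum) hg0
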